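/- Let M be an R-module and r ∈ R a non-unit that is a non-zero divisor on both R and M. If 0 → M → I^0 → I^1 → ⋯ is a minimal injective resolution of M with differentials d^i, then there is a natural R/(r)-isomorphism M/rM ≅ Hom_R(R/(r), im d^0), and 0 → Hom_R(R/(r), I^1) → Hom_R(R/(r), I^2) → ⋯ is a minimal injective resolution of the R/(r)-module M/rM. -/

import Mathlib

open CategoryTheory

universe u

variable (R : Type u) [CommRing R]

/-- `M` has the `t(p)`-property. -/
def HasTProperty (p : Ideal R) (M : Type u) [AddCommGroup M] [Module R M] : Prop :=
  (∀ r : R, r ∉ p → Function.Bijective (fun x : M => r • x)) ∧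
    ∀ x : M, ∃ m : ℕ, 1 ≤ m ∧ ∀ a ∈ p ^ m, a • x = 0

/-- `E` is an injective envelope of `M`. -/
def IsInjectiveEnvelope (M E : Type u) [AddCommGroup M] [Module R M]
    [AddCommGroup E] [Module R E] : Prop :=
  Module.Injective R E ∧ ∃ f : M →ₗ[R] E, Function.Injective f ∧
    ∀ N : Submodule R E, N ≠ ⊥ → N ⊓ LinearMap.range f ≠ ⊥

/-- `C` is a semidualizing `R`-module. -/
def IsSemidualizing (C : Type u) [AddCommGroup C] [Module R C] : Prop :=
  Module.Finite R C ∧ Function.Bijective (LinearMap.lsmul R C) ∧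
    ∀ i : ℕ, 0 < i → Subsingleton
      (((Ext R (ModuleCat.{u} R) i).obj
        (Opposite.op (ModuleCat.of R C))).obj (ModuleCat.of R C))

/-- `C` has finite injective dimension over `R`. -/
def HasFiniteInjectiveDimension (C : Type u) [AddCommGroup C] [Module R C] : Prop :=
  ∃ n : ℕ, ∀ (N : ModuleCat.{u} R) (i : ℕ), n < i →
    Subsingleton (((Ext R (ModuleCat.{u} R) i).obj (Opposite.op N)).obj (ModuleCat.of R C))

/-- `C` is a dualizing `R`-module. -/
def IsDualizing (C : Type u) [AddCommGroup C] [Module R C] : Prop :=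
  IsSemidualizing R C ∧ HasFiniteInjectiveDimension R C

/-- `M` is `C`-injective. -/
def IsCInjective (C : Type u) [AddCommGroup C] [Module R C]
    (M : Type u) [AddCommGroup M] [Module R M] : Prop :=
  ∃ (I : Type u) (_ : AddCommGroup I) (_ : Module R I),
    Module.Injective R I ∧ Nonempty (M ≃ₗ[R] (C →ₗ[R] I))

/-- `Tor_i^R(M,N)` as a module category object. -/
noncomputable def TorMod (i : ℕ) (M N : Type u) [AddCommGroup M] [Module R M]
    [AddCommGroup N] [Module R N] : ModuleCat.{u} R :=
  ((Tor (ModuleCat.{u} R) i).obj (ModuleCat.of R M)).obj (ModuleCat.of R N)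

/-- The Krull dimension of a module, as dimension of `R ⧸ Ann M`. -/
noncomputable def moduleKrullDim (M : Type u) [AddCommGroup M] [Module R M] :
    WithBot (WithTop ℕ) :=
  ringKrullDim (R ⧸ Module.annihilator R M)

/-- `0 → M → J 0 → J 1 → ⋯` (with augmentation `f` and differentials `d`) is a
minimal injective resolution of `M` over `S`. -/
def IsMinimalInjectiveResolution (S : Type u) [CommRing S]
    (M : Type u) [AddCommGroup M] [Module S M]
    (J : ℕ → Type u) [∀ n, AddCommGroup (J n)] [∀ n, Module S (J n)]
    (f : M →ₗ[S] J 0) (d : ∀ n, J n →ₗ[S] J (n + 1)) : Prop :=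
  (∀ n, Module.Injective S (J n)) ∧ Function.Injective f ∧
    LinearMap.range f = LinearMap.ker (d 0) ∧
    (∀ n, LinearMap.range (d n) = LinearMap.ker (d (n + 1))) ∧
    (∀ N : Submodule S (J 0), N ≠ ⊥ → N ⊓ LinearMap.range f ≠ ⊥) ∧
    ∀ n, ∀ N : Submodule S (J (n + 1)), N ≠ ⊥ → N ⊓ LinearMap.range (d n) ≠ ⊥

section AuxLemmas
variable {R : Type u} [CommRing R]



lemma aux_div {I : Type u} [AddCommGroup I] [Module R I]
    (hI : Module.Injective R I) {r : R} (hr : r ∈ nonZeroDivisors R) (z : I) :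
    ∃ y : I, r • y = z := by
  obtain ⟨h, hh⟩ := hI.out (X := R) (Y := R) (LinearMap.lsmul R R r)
    (fun a b hab => by
      simpa using (mul_cancel_left_mem_nonZeroDivisors hr).mp (by simpa using hab))
    (LinearMap.toSpanSingleton R I z)
  refine ⟨h 1, ?_⟩
  have := hh 1
  simp only [LinearMap.lsmul_apply, smul_eq_mul, mul_one, LinearMap.toSpanSingleton_apply_one] at this
  rw [← this, ← h.map_smul, smul_eq_mul, mul_one]

lemma aux_tor_inj {I : Type u} [AddCommGroup I] [Module R I]
    (hI : Module.Injective R I) (r : R) :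
    Module.Injective (R ⧸ Ideal.span {r}) (Submodule.torsionBy R I r) := by
  constructor
  intro X Y _ _ _ _ g hg h
  letI : Module R X := Module.compHom X (Ideal.Quotient.mk (Ideal.span {r}))
  letI : Module R Y := Module.compHom Y (Ideal.Quotient.mk (Ideal.span {r}))
  let gR : X →ₗ[R] Y :=
    { toFun := g, map_add' := g.map_add,
      map_smul' := fun a x => g.map_smul (Ideal.Quotient.mk _ a) x }
  let hR : X →ₗ[R] I :=
    { toFun := fun x => (h x : I),
      map_add' := fun a b => by simp,
      map_smul' := fun a x =>
        congrArg Subtype.val (h.map_smul (Ideal.Quotient.mk (Ideal.span {r}) a) x) }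
  obtain ⟨H, hH⟩ := hI.out gR hg hR
  have htor : ∀ y : Y, r • H y = 0 := by
    intro y
    have : (r : R) • y = 0 := by
      show (Ideal.Quotient.mk (Ideal.span {r}) r) • y = 0
      rw [Ideal.Quotient.eq_zero_iff_mem.mpr (Ideal.mem_span_singleton_self r), zero_smul]
    rw [← H.map_smul, this, H.map_zero]
  refine ⟨{ toFun := fun y => ⟨H y, htor y⟩,
            map_add' := fun a b => by ext; simp,
            map_smul' := fun s y => ?_ }, fun x => Subtype.ext (hH x)⟩
  obtain ⟨a, rfl⟩ := Ideal.Quotient.mk_surjective s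
  exact Subtype.ext (H.map_smul a y)

/-- Upgrade an `R`-linear map to an `R ⧸ (r)`-linear map. -/
def aux_toSLinear {r : R} {A B : Type u} [AddCommGroup A] [AddCommGroup B]
    [Module R A] [Module R B]
    [Module (R ⧸ Ideal.span {r}) A] [Module (R ⧸ Ideal.span {r}) B]
    (hA : ∀ (a : R) (x : A), (Ideal.Quotient.mk (Ideal.span {r})) a • x = a • x)
    (hB : ∀ (a : R) (x : B), (Ideal.Quotient.mk (Ideal.span {r})) a • x = a • x)
    (g : A →ₗ[R] B) : A →ₗ[R ⧸ Ideal.span {r}] B where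
  toFun := g
  map_add' := g.map_add
  map_smul' := fun s x => by
    obtain ⟨a, rfl⟩ := Ideal.Quotient.mk_surjective s
    rw [RingHom.id_apply, hA, hB]; exact g.map_smul a x

@[simp] lemma aux_toSLinear_apply {r : R} {A B : Type u} [AddCommGroup A] [AddCommGroup B]
    [Module R A] [Module R B]
    [Module (R ⧸ Ideal.span {r}) A] [Module (R ⧸ Ideal.span {r}) B]
    (hA : ∀ (a : R) (x : A), (Ideal.Quotient.mk (Ideal.span {r})) a • x = a • x)
    (hB : ∀ (a : R) (x : B), (Ideal.Quotient.mk (Ideal.span {r})) a • x = a • x)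
    (g : A →ₗ[R] B) (x : A) : aux_toSLinear hA hB g x = g x := rfl

end AuxLemmas

theorem stmt12 [IsNoetherianRing R] (M : Type u) [AddCommGroup M] [Module R M]
    (r : R) (hr : ¬ IsUnit r) (hrR : r ∈ nonZeroDivisors R)
    (hrM : ∀ x : M, r • x = 0 → x = 0)
    (J : ℕ → Type u) [∀ n, AddCommGroup (J n)] [∀ n, Module R (J n)]
    (f : M →ₗ[R] J 0) (d : ∀ n, J n →ₗ[R] J (n + 1))
    (hres : IsMinimalInjectiveResolution R M J f d) :
    Nonempty ((M ⧸ (Ideal.span {r} • (⊤ : Submodule R M))) ≃ₗ[R ⧸ Ideal.span {r}]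
      Submodule.torsionBy R ↥(LinearMap.range (d 0)) r) ∧
    ∃ (f' : (M ⧸ (Ideal.span {r} • (⊤ : Submodule R M))) →ₗ[R ⧸ Ideal.span {r}]
        Submodule.torsionBy R (J 1) r)
      (d' : ∀ n, Submodule.torsionBy R (J (n + 1)) r →ₗ[R ⧸ Ideal.span {r}]
        Submodule.torsionBy R (J (n + 2)) r),
      (∀ (x : M) (y : J 0), r • y = f x →
        (f' (Submodule.Quotient.mk x) : J 1) = d 0 y) ∧
      (∀ (n : ℕ) (x : Submodule.torsionBy R (J (n + 1)) r),
        ((d' n x : J (n + 2))) = d (n + 1) (x : J (n + 1))) ∧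
      IsMinimalInjectiveResolution (R ⧸ Ideal.span {r})
        (M ⧸ (Ideal.span {r} • (⊤ : Submodule R M)))
        (fun n => Submodule.torsionBy R (J (n + 1)) r) f' d' := by
  classical
  obtain ⟨hinj, hfinj, hker0, hker, hess0, hess⟩ := hres
  -- Step 1: J 0 is r-torsion-free
  have step1 : ∀ y : J 0, r • y = 0 → y = 0 := by
    intro y hy
    by_contra hne
    have h1 : Submodule.torsionBy R (J 0) r ⊓ LinearMap.range f = ⊥ := by
      rw [Submodule.eq_bot_iff]
      intro z hz
      obtain ⟨hz1, hz2⟩ := Submodule.mem_inf.mp hz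
      obtain ⟨x, rfl⟩ := hz2
      have hfr : f (r • x) = 0 := by
        rw [f.map_smul]; exact (Submodule.mem_torsionBy_iff _ _).mp hz1
      have hx : r • x = 0 := hfinj (by rw [hfr, f.map_zero])
      rw [hrM x hx, f.map_zero]
    exact hess0 _ (Submodule.ne_bot_iff _ |>.mpr
      ⟨y, (Submodule.mem_torsionBy_iff _ _).mpr hy, hne⟩) h1
  have step2 : ∀ y y' : J 0, r • y = r • y' → y = y' := by
    intro y y' h
    exact sub_eq_zero.mp (step1 (y - y') (by rw [smul_sub, h, sub_self]))
  have step3 : ∀ x : M, ∃ y : J 0, r • y = f x := fun x => aux_div (hinj 0) hrR (f x)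
  choose g hg using step3
  have hdiv : ∀ n (z : J n), ∃ y, r • y = z := fun n z => aux_div (hinj n) hrR z
  have hfker : ∀ x : M, d 0 (f x) = 0 := by
    intro x
    have : f x ∈ LinearMap.ker (d 0) := hker0 ▸ LinearMap.mem_range_self f x
    exact this
  have htor0 : ∀ x : M, r • d 0 (g x) = 0 := by
    intro x
    rw [← (d 0).map_smul, hg]
    exact hfker x
  have hkey : ∀ (x : M) (y : J 0), r • y = f x → d 0 (g x) = d 0 y := by
    intro x y hy
    rw [step2 (g x) y (by rw [hg, hy])]
  -- F : M → torsionBy (J 1) r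
  let F : M →ₗ[R] Submodule.torsionBy R (J 1) r :=
    { toFun := fun x => ⟨d 0 (g x), (Submodule.mem_torsionBy_iff _ _).mpr (htor0 x)⟩
      map_add' := fun x x' => Subtype.ext (by
        show d 0 (g (x + x')) = d 0 (g x) + d 0 (g x')
        rw [← (d 0).map_add]
        exact hkey (x + x') (g x + g x') (by rw [smul_add, hg, hg, f.map_add]))
      map_smul' := fun a x => Subtype.ext (by
        show d 0 (g (a • x)) = a • d 0 (g x)
        rw [← (d 0).map_smul]
        exact hkey (a • x) (a • g x) (by rw [smul_comm, hg, f.map_smul])) }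
  have hFcoe : ∀ x : M, (F x : J 1) = d 0 (g x) := fun _ => rfl
  have hdgr : ∀ x : M, d 0 (g (r • x)) = 0 := by
    intro x
    rw [hkey (r • x) (f x) (by rw [f.map_smul])]
    exact hfker x
  have hFr : ∀ x : M, F (r • x) = 0 := fun x => Subtype.ext (hdgr x)
  have hNle : Ideal.span {r} • (⊤ : Submodule R M) ≤ LinearMap.ker F := by
    rw [Submodule.smul_le]
    intro a ha x _
    obtain ⟨c, rfl⟩ := Ideal.mem_span_singleton'.mp ha
    rw [LinearMap.mem_ker, mul_smul, F.map_smul, hFr, smul_zero]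
  have hsmulQ : ∀ (a : R) (x : M ⧸ (Ideal.span {r} • (⊤ : Submodule R M))),
      (Ideal.Quotient.mk (Ideal.span {r})) a • x = a • x := by
    intro a x
    obtain ⟨m, rfl⟩ := Submodule.Quotient.mk_surjective _ x
    rfl
  have hsmulT : ∀ (n : ℕ) (a : R) (x : Submodule.torsionBy R (J n) r),
      (Ideal.Quotient.mk (Ideal.span {r})) a • x = a • x := fun _ _ _ => rfl
  have hsmulT' : ∀ (a : R) (x : Submodule.torsionBy R (↥(LinearMap.range (d 0))) r),
      (Ideal.Quotient.mk (Ideal.span {r})) a • x = a • x := fun _ _ => rfl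
  -- f'
  let f' := aux_toSLinear hsmulQ (hsmulT 1)
    ((Ideal.span {r} • (⊤ : Submodule R M)).liftQ F hNle)
  have hf'mk : ∀ x : M, f' (Submodule.Quotient.mk x) = F x := fun _ => rfl
  have hf'spec : ∀ (x : M) (y : J 0), r • y = f x →
      (f' (Submodule.Quotient.mk x) : J 1) = d 0 y := by
    intro x y hy
    rw [hf'mk, hFcoe]
    exact hkey x y hy
  have hdgker : ∀ x : M, d 0 (g x) = 0 → x ∈ Ideal.span {r} • (⊤ : Submodule R M) := by
    intro x h0
    have hmem : g x ∈ LinearMap.range f := by rw [hker0]; exact h0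
    obtain ⟨x', hx'⟩ := hmem
    have hfx : f x = f (r • x') := by rw [f.map_smul, hx', hg]
    rw [hfinj hfx]
    exact Submodule.smul_mem_smul (Ideal.mem_span_singleton_self r) Submodule.mem_top
  have hf'inj : Function.Injective f' := by
    rw [← LinearMap.ker_eq_bot, Submodule.eq_bot_iff]
    intro q hq
    obtain ⟨x, rfl⟩ := Submodule.Quotient.mk_surjective _ q
    have hx : F x = 0 := hq
    rw [Submodule.Quotient.mk_eq_zero]
    exact hdgker x (congrArg Subtype.val hx)
  -- d'
  let Dr : ∀ n, Submodule.torsionBy R (J (n+1)) r →ₗ[R] Submodule.torsionBy R (J (n+2)) r :=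
    fun n => (d (n+1)).restrict (p := Submodule.torsionBy R (J (n+1)) r)
      (q := Submodule.torsionBy R (J (n+2)) r) (fun x hx => by
        rw [Submodule.mem_torsionBy_iff] at hx ⊢
        rw [← (d (n+1)).map_smul, hx, map_zero])
  let d' : ∀ n, Submodule.torsionBy R (J (n+1)) r →ₗ[R ⧸ Ideal.span {r}]
      Submodule.torsionBy R (J (n+2)) r :=
    fun n => aux_toSLinear (hsmulT (n+1)) (hsmulT (n+2)) (Dr n)
  have hd'spec : ∀ (n : ℕ) (x : Submodule.torsionBy R (J (n + 1)) r),
      ((d' n x : J (n + 2))) = d (n + 1) (x : J (n + 1)) := fun _ _ => rfl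
  have hsurj : ∀ n (z : J (n+2)), r • z = 0 → d (n+2) z = 0 →
      ∃ y' : J (n+1), r • y' = 0 ∧ d (n+1) y' = z := by
    intro n z hz hdz
    have hmem : z ∈ LinearMap.range (d (n+1)) := by rw [hker (n+1)]; exact hdz
    obtain ⟨y, hy⟩ := hmem
    have hry : r • y ∈ LinearMap.range (d n) := by
      rw [hker n]
      show d (n+1) (r • y) = 0
      rw [(d (n+1)).map_smul, hy, hz]
    obtain ⟨w, hw⟩ := hry
    obtain ⟨w', hw'⟩ := hdiv n w
    refine ⟨y - d n w', ?_, ?_⟩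
    · rw [smul_sub, ← (d n).map_smul, hw', hw, sub_self]
    · rw [(d (n+1)).map_sub, hy, sub_eq_self]
      have : d n w' ∈ LinearMap.ker (d (n+1)) := by
        rw [← hker n]; exact LinearMap.mem_range_self _ _
      exact this
  have hsurj0 : ∀ z : J 1, r • z = 0 → z ∈ LinearMap.range (d 0) →
      ∃ x : M, (f' (Submodule.Quotient.mk x) : J 1) = z := by
    intro z hz hmem
    obtain ⟨y, hy⟩ := hmem
    have hry : r • y ∈ LinearMap.range f := by
      rw [hker0]
      show d 0 (r • y) = 0
      rw [(d 0).map_smul, hy, hz]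
    obtain ⟨x, hx⟩ := hry
    refine ⟨x, ?_⟩
    rw [hf'spec x y hx.symm]
    exact hy
  -- the isomorphism M/rM ≃ torsionBy (range d0) r
  have htorG : ∀ x : M, r • (⟨d 0 (g x), LinearMap.mem_range_self (d 0) (g x)⟩ :
      ↥(LinearMap.range (d 0))) = 0 := fun x => Subtype.ext (htor0 x)
  let G : M →ₗ[R] Submodule.torsionBy R (↥(LinearMap.range (d 0))) r :=
    { toFun := fun x => ⟨⟨d 0 (g x), LinearMap.mem_range_self (d 0) (g x)⟩,
        (Submodule.mem_torsionBy_iff _ _).mpr (htorG x)⟩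
      map_add' := fun x x' => Subtype.ext (Subtype.ext (by
        show d 0 (g (x + x')) = d 0 (g x) + d 0 (g x')
        rw [← (d 0).map_add]
        exact hkey (x + x') (g x + g x') (by rw [smul_add, hg, hg, f.map_add])))
      map_smul' := fun a x => Subtype.ext (Subtype.ext (by
        show d 0 (g (a • x)) = a • d 0 (g x)
        rw [← (d 0).map_smul]
        exact hkey (a • x) (a • g x) (by rw [smul_comm, hg, f.map_smul]))) }
  have hGr : ∀ x : M, G (r • x) = 0 := fun x => Subtype.ext (Subtype.ext (hdgr x))
  have hNleG : Ideal.span {r} • (⊤ : Submodule R M) ≤ LinearMap.ker G := by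
    rw [Submodule.smul_le]
    intro a ha x _
    obtain ⟨c, rfl⟩ := Ideal.mem_span_singleton'.mp ha
    rw [LinearMap.mem_ker, mul_smul, G.map_smul, hGr, smul_zero]
  let GS := aux_toSLinear hsmulQ hsmulT'
    ((Ideal.span {r} • (⊤ : Submodule R M)).liftQ G hNleG)
  have hGSinj : Function.Injective GS := by
    rw [← LinearMap.ker_eq_bot, Submodule.eq_bot_iff]
    intro q hq
    obtain ⟨x, rfl⟩ := Submodule.Quotient.mk_surjective _ q
    have hx : G x = 0 := hq
    rw [Submodule.Quotient.mk_eq_zero]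
    exact hdgker x (congrArg Subtype.val (congrArg Subtype.val hx))
  have hGSsurj : Function.Surjective GS := by
    intro w
    have hz : r • ((w : ↥(LinearMap.range (d 0))) : J 1) = 0 :=
      congrArg Subtype.val ((Submodule.mem_torsionBy_iff _ _).mp w.2)
    obtain ⟨y, hy⟩ := (w : ↥(LinearMap.range (d 0))).2
    have hry : r • y ∈ LinearMap.range f := by
      rw [hker0]
      show d 0 (r • y) = 0
      rw [(d 0).map_smul, hy, hz]
    obtain ⟨x, hx⟩ := hry
    refine ⟨Submodule.Quotient.mk x, ?_⟩
    apply Subtype.ext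
    apply Subtype.ext
    show d 0 (g x) = _
    rw [hkey x y hx.symm]
    exact hy
  refine ⟨⟨LinearEquiv.ofBijective GS ⟨hGSinj, hGSsurj⟩⟩, f', d', hf'spec, hd'spec,
    fun n => aux_tor_inj (hinj (n+1)) r, hf'inj, ?_, ?_, ?_, ?_⟩
  -- range f' = ker (d' 0)
  · apply le_antisymm
    · intro z hz
      obtain ⟨q, rfl⟩ := hz
      obtain ⟨x, rfl⟩ := Submodule.Quotient.mk_surjective _ q
      rw [LinearMap.mem_ker]
      apply Subtype.ext
      show d 1 ((f' (Submodule.Quotient.mk x) : J 1)) = 0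
      rw [hf'spec x (g x) (hg x)]
      have : d 0 (g x) ∈ LinearMap.ker (d 1) := by
        rw [← hker 0]; exact LinearMap.mem_range_self _ _
      exact this
    · intro z hz
      have hdz : d 1 (z : J 1) = 0 := congrArg Subtype.val (LinearMap.mem_ker.mp hz)
      have hmem : (z : J 1) ∈ LinearMap.range (d 0) := by rw [hker 0]; exact hdz
      obtain ⟨x, hx⟩ := hsurj0 (z : J 1) ((Submodule.mem_torsionBy_iff _ _).mp z.2) hmem
      exact ⟨Submodule.Quotient.mk x, Subtype.ext hx⟩
  -- range (d' n) = ker (d' (n+1))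
  · intro n
    apply le_antisymm
    · intro z hz
      obtain ⟨w, rfl⟩ := hz
      rw [LinearMap.mem_ker]
      apply Subtype.ext
      show d (n+2) ((d' n w : J (n+2))) = 0
      rw [hd'spec]
      have : d (n+1) (w : J (n+1)) ∈ LinearMap.ker (d (n+2)) := by
        rw [← hker (n+1)]; exact LinearMap.mem_range_self _ _
      exact this
    · intro z hz
      have hdz : d (n+2) (z : J (n+2)) = 0 := congrArg Subtype.val (LinearMap.mem_ker.mp hz)
      obtain ⟨y', hy'1, hy'2⟩ :=
        hsurj n (z : J (n+2)) ((Submodule.mem_torsionBy_iff _ _).mp z.2) hdz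
      exact ⟨⟨y', (Submodule.mem_torsionBy_iff _ _).mpr hy'1⟩, Subtype.ext hy'2⟩
  -- essentiality at position 0
  · intro N' hN'
    let P : Submodule R (J 1) :=
      (Submodule.restrictScalars R N').map (Submodule.torsionBy R (J 1) r).subtype
    have hP : P ≠ ⊥ := by
      obtain ⟨u, hu, hune⟩ := Submodule.ne_bot_iff _ |>.mp hN'
      exact Submodule.ne_bot_iff _ |>.mpr
        ⟨(u : J 1), Submodule.mem_map.mpr ⟨u, hu, rfl⟩, fun h => hune (Subtype.ext h)⟩
    obtain ⟨zz, hzz, hzzne⟩ := Submodule.ne_bot_iff _ |>.mp (hess 0 P hP)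
    obtain ⟨hzP, hzR⟩ := Submodule.mem_inf.mp hzz
    obtain ⟨u1, hu1, rfl⟩ := Submodule.mem_map.mp hzP
    obtain ⟨x, hx⟩ := hsurj0 (u1 : J 1) ((Submodule.mem_torsionBy_iff _ _).mp u1.2) hzR
    apply Submodule.ne_bot_iff _ |>.mpr
    exact ⟨u1, Submodule.mem_inf.mpr ⟨hu1, ⟨Submodule.Quotient.mk x, Subtype.ext hx⟩⟩,
      fun h => hzzne (by rw [h]; rfl)⟩
  -- essentiality at positions n + 1
  · intro n N' hN'
    let P : Submodule R (J (n+2)) :=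
      (Submodule.restrictScalars R N').map (Submodule.torsionBy R (J (n+2)) r).subtype
    have hP : P ≠ ⊥ := by
      obtain ⟨u, hu, hune⟩ := Submodule.ne_bot_iff _ |>.mp hN'
      exact Submodule.ne_bot_iff _ |>.mpr
        ⟨(u : J (n+2)), Submodule.mem_map.mpr ⟨u, hu, rfl⟩, fun h => hune (Subtype.ext h)⟩
    obtain ⟨zz, hzz, hzzne⟩ := Submodule.ne_bot_iff _ |>.mp (hess (n+1) P hP)
    obtain ⟨hzP, hzR⟩ := Submodule.mem_inf.mp hzz
    obtain ⟨u1, hu1, rfl⟩ := Submodule.mem_map.mp hzP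
    have hdz : d (n+2) (u1 : J (n+2)) = 0 := by
      have : (u1 : J (n+2)) ∈ LinearMap.ker (d (n+2)) := hker (n+1) ▸ hzR
      exact this
    obtain ⟨y', hy'1, hy'2⟩ :=
      hsurj n (u1 : J (n+2)) ((Submodule.mem_torsionBy_iff _ _).mp u1.2) hdz
    apply Submodule.ne_bot_iff _ |>.mpr
    refine ⟨u1, Submodule.mem_inf.mpr ⟨hu1,
      ⟨⟨y', (Submodule.mem_torsionBy_iff _ _).mpr hy'1⟩, Subtype.ext hy'2⟩⟩,
      fun h => hzzne (by rw [h]; rfl)⟩
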